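/- arXiv:1512.01449 — 3 statements merged into one kernel-verified Lean document; each statement's English description precedes it below -/
import Mathlib

section
/- For all even nonnegative integers p and q and all positive integers k₁, k₂, the following exact formula holds: f^{(p,q)}_{k₁,k₂} = Γ(k₁ + k₂ + (p+q)/2 − 3/2) + q · E(k₁ + p/2, k₂ + q/2 − 1). -/
open MeasureTheory

/-- The skew-orthogonal monic polynomials: `P_{2j}(x) = x^{2j}`,
`P_{2j+1}(x) = x^{2j+1} - 2j x^{2j-1}`, as functions on a field. -/
noncomputable def Pskew {K : Type*} [Field K] (k : ℕ) (x : K) : K :=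
  if Even k then x ^ k else x ^ k - ((k : K) - 1) * x ^ (k - 2)

/-- `f^{(p,q)}_{k₁,k₂} = (1/2) ∫∫ x^p y^q e^{-x²/2-y²/2} P_{2k₁-2}(x) P_{2k₂-1}(y) sign(y-x) dx dy`. -/
noncomputable def fpq (p q k₁ k₂ : ℕ) : ℝ :=
  (1 / 2) * ∫ x : ℝ, ∫ y : ℝ,
    x ^ p * y ^ q * Real.exp (-x ^ 2 / 2 - y ^ 2 / 2) *
      Pskew (2 * k₁ - 2) x * Pskew (2 * k₂ - 1) y * Real.sign (y - x)

/-- `E(j,k) = (k-1)! 2^{k-1} ∑_{i=0}^{k-1} Γ(i+j-1/2)/(2^i i!)`. -/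
noncomputable def Efun (j k : ℕ) : ℝ :=
  ((k - 1).factorial : ℝ) * 2 ^ (k - 1) *
    ∑ i ∈ Finset.range k, Real.Gamma ((i : ℝ) + (j : ℝ) - 1 / 2) / (2 ^ i * (i.factorial : ℝ))

open Real Filter Set Asymptotics

noncomputable def Rp : ℕ → ℝ → ℝ
  | 0, _ => 1
  | (h+1), x => x ^ (2*h+2) + (2*(h:ℝ)+2) * Rp h x

noncomputable def Rd : ℕ → ℝ → ℝ
  | 0, _ => 0
  | (h+1), x => (2*(h:ℝ)+2) * x ^ (2*h+1) + (2*(h:ℝ)+2) * Rd h x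

lemma Rp_hasDerivAt (h : ℕ) (x : ℝ) : HasDerivAt (fun x => Rp h x) (Rd h x) x := by
  induction h with
  | zero => simpa [Rp, Rd] using hasDerivAt_const x (1:ℝ)
  | succ h ih =>
    have h1 : HasDerivAt (fun x : ℝ => x ^ (2*h+2)) (((2*h+2 : ℕ) : ℝ) * x ^ (2*h+1)) x := by
      simpa using hasDerivAt_pow (2*h+2) x
    have := h1.add ((ih.const_mul (2*(h:ℝ)+2)))
    simp only [Rp, Rd]
    refine this.congr_deriv (Eq.symm ?_)
    push_cast
    ring

lemma Rp_key (h : ℕ) (x : ℝ) : x * Rp h x - Rd h x = x ^ (2*h+1) := by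
  induction h with
  | zero => simp [Rp, Rd]
  | succ h ih =>
    simp only [Rp, Rd]
    linear_combination (2*(h:ℝ)+2) * ih

lemma measurable_rsign : Measurable Real.sign := by
  unfold Real.sign
  exact Measurable.ite (measurableSet_lt measurable_id measurable_const) measurable_const
    (Measurable.ite (measurableSet_lt measurable_const measurable_id) measurable_const
      measurable_const)

lemma abs_rsign_le (t : ℝ) : |Real.sign t| ≤ 1 := by
  rcases lt_trichotomy t 0 with h|h|h
  · rw [Real.sign_of_neg h]; norm_num
  · rw [h, Real.sign_zero]; norm_num
  · rw [Real.sign_of_pos h]; norm_num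

lemma int_pow_gauss (n : ℕ) {b : ℝ} (hb : 0 < b) :
    Integrable (fun x : ℝ => x ^ n * Real.exp (-b * x^2)) := by
  have h : (-1 : ℝ) < n := neg_one_lt_zero.trans_le (Nat.cast_nonneg n)
  simpa [Real.rpow_natCast] using integrable_rpow_mul_exp_neg_mul_sq hb h

lemma int_pow_gauss_half (n : ℕ) :
    Integrable (fun x : ℝ => x ^ n * Real.exp (-x^2/2)) := by
  have e : ∀ x : ℝ, -x^2/2 = -(1/2:ℝ)*x^2 := fun x => by ring
  simp_rw [e]; exact int_pow_gauss n one_half_pos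

lemma int_pow_gauss_one (n : ℕ) :
    Integrable (fun x : ℝ => x ^ n * Real.exp (-x^2)) := by
  have e : ∀ x : ℝ, -x^2 = -(1:ℝ)*x^2 := fun x => by ring
  simp_rw [e]; exact int_pow_gauss n one_pos

lemma int_pow_gauss_sign (n : ℕ) (x : ℝ) :
    Integrable (fun y : ℝ => y ^ n * Real.exp (-y^2/2) * Real.sign (y - x)) := by
  apply Integrable.mono' (int_pow_gauss_half n).abs
  · exact ((measurable_id.pow_const n).mul
      ((measurable_id.pow_const 2).neg.div_const 2).exp).mul
      ((measurable_rsign.comp (measurable_id.sub_const x))) |>.aestronglyMeasurable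
  · filter_upwards with y
    rw [norm_mul]
    calc ‖y ^ n * Real.exp (-y^2/2)‖ * ‖Real.sign (y - x)‖
        ≤ ‖y ^ n * Real.exp (-y^2/2)‖ * 1 := by
          gcongr; exact abs_rsign_le _
      _ = |y ^ n * Real.exp (-y^2/2)| := by rw [mul_one]; rfl

lemma tendsto_mono_top (n : ℕ) :
    Tendsto (fun y : ℝ => y ^ n * Real.exp (-y^2/2)) atTop (nhds 0) := by
  have h := rpow_mul_exp_neg_mul_sq_isLittleO_exp_neg (b := 1/2) one_half_pos (n : ℝ)
  have h2 : (fun y : ℝ => y ^ n * Real.exp (-y^2/2)) =o[atTop]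
      fun x : ℝ => Real.exp (-(1/2) * x) := by
    refine h.congr' ?_ (Eventually.of_forall fun _ => rfl)
    filter_upwards with y
    rw [Real.rpow_natCast]
    ring_nf
  refine h2.trans_tendsto ?_
  have hb : Tendsto (fun x : ℝ => -(1/2 : ℝ) * x) atTop atBot := by
    have h3 : Tendsto (fun x : ℝ => x / 2) atTop atTop := tendsto_id.atTop_div_const two_pos
    have h4 := tendsto_neg_atTop_atBot.comp h3
    refine h4.congr fun x => ?_
    simp [Function.comp]
    ring
  exact Real.tendsto_exp_atBot.comp hb

lemma tendsto_mono_bot (n : ℕ) :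
    Tendsto (fun y : ℝ => y ^ n * Real.exp (-y^2/2)) atBot (nhds 0) := by
  have h : Tendsto (fun y : ℝ => (-1:ℝ)^n * ((-y) ^ n * Real.exp (-(-y)^2/2))) atBot (nhds 0) := by
    have := (tendsto_mono_top n).comp tendsto_neg_atBot_atTop
    simpa using this.const_mul ((-1:ℝ)^n)
  refine h.congr fun y => ?_
  ring_nf
  rw [pow_mul', neg_one_sq, one_pow, mul_one]

lemma tendsto_expR_top (h : ℕ) :
    Tendsto (fun y : ℝ => Real.exp (-y^2/2) * Rp h y) atTop (nhds 0) := by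
  induction h with
  | zero =>
    refine (tendsto_mono_top 0).congr fun y => ?_
    simp [Rp]
  | succ h ih =>
    have h5 := (tendsto_mono_top (2*h+2)).add (ih.const_mul (2*(h:ℝ)+2))
    rw [show (0:ℝ) + (2*(h:ℝ)+2) * 0 = 0 by ring] at h5
    refine h5.congr fun y => ?_
    simp only [Rp]
    ring

lemma tendsto_expR_bot (h : ℕ) :
    Tendsto (fun y : ℝ => Real.exp (-y^2/2) * Rp h y) atBot (nhds 0) := by
  induction h with
  | zero =>
    refine (tendsto_mono_bot 0).congr fun y => ?_
    simp [Rp]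
  | succ h ih =>
    have h5 := (tendsto_mono_bot (2*h+2)).add (ih.const_mul (2*(h:ℝ)+2))
    rw [show (0:ℝ) + (2*(h:ℝ)+2) * 0 = 0 by ring] at h5
    refine h5.congr fun y => ?_
    simp only [Rp]
    ring

lemma F_tendsto_top (h : ℕ) :
    Tendsto (fun y : ℝ => -Real.exp (-y^2/2) * Rp h y) atTop (nhds 0) := by
  have := (tendsto_expR_top h).neg
  rw [neg_zero] at this
  exact this.congr fun y => by ring

lemma F_tendsto_bot (h : ℕ) :
    Tendsto (fun y : ℝ => -Real.exp (-y^2/2) * Rp h y) atBot (nhds 0) := by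
  have := (tendsto_expR_bot h).neg
  rw [neg_zero] at this
  exact this.congr fun y => by ring

lemma F_hasDerivAt (h : ℕ) (y : ℝ) :
    HasDerivAt (fun y : ℝ => -Real.exp (-y^2/2) * Rp h y)
      (y ^ (2*h+1) * Real.exp (-y^2/2)) y := by
  have h1 : HasDerivAt (fun y : ℝ => -y^2/2) (-y) y := by
    have := ((hasDerivAt_pow 2 y).neg).div_const 2
    refine this.congr_deriv (Eq.symm ?_)
    norm_num
    ring
  have he : HasDerivAt (fun y : ℝ => -Real.exp (-y^2/2)) (y * Real.exp (-y^2/2)) y := by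
    have := (h1.exp).neg
    refine this.congr_deriv (Eq.symm ?_)
    ring
  have hm := he.mul (Rp_hasDerivAt h y)
  refine hm.congr_deriv (Eq.symm ?_)
  have k := Rp_key h y
  linear_combination (-Real.exp (-y^2/2)) * k

lemma integral_sign_odd (h : ℕ) (x : ℝ) :
    ∫ y : ℝ, y ^ (2*h+1) * Real.exp (-y^2/2) * Real.sign (y - x)
      = 2 * Real.exp (-x^2/2) * Rp h x := by
  have gint := int_pow_gauss_half (2*h+1)
  have fint := int_pow_gauss_sign (2*h+1) x
  have hIic : ∫ y in Iic x, y ^ (2*h+1) * Real.exp (-y^2/2)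
      = (-Real.exp (-x^2/2) * Rp h x) - 0 :=
    integral_Iic_of_hasDerivAt_of_tendsto' (fun y _ => F_hasDerivAt h y)
      gint.integrableOn (F_tendsto_bot h)
  have hIoi : ∫ y in Ioi x, y ^ (2*h+1) * Real.exp (-y^2/2)
      = 0 - (-Real.exp (-x^2/2) * Rp h x) :=
    integral_Ioi_of_hasDerivAt_of_tendsto' (fun y _ => F_hasDerivAt h y)
      gint.integrableOn (F_tendsto_top h)
  rw [← intervalIntegral.integral_Iic_add_Ioi (f := fun y : ℝ => y ^ (2*h+1) * Real.exp (-y^2/2) * Real.sign (y - x))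
    fint.integrableOn fint.integrableOn]
  have e1 : ∫ y in Iic x, y ^ (2*h+1) * Real.exp (-y^2/2) * Real.sign (y - x)
      = - ∫ y in Iic x, y ^ (2*h+1) * Real.exp (-y^2/2) := by
    rw [integral_Iic_eq_integral_Iio, integral_Iic_eq_integral_Iio, ← integral_neg]
    apply setIntegral_congr_fun measurableSet_Iio
    intro y hy
    simp only
    rw [Real.sign_of_neg (by simp only [mem_Iio] at hy; linarith)]
    ring
  have e2 : ∫ y in Ioi x, y ^ (2*h+1) * Real.exp (-y^2/2) * Real.sign (y - x)
      = ∫ y in Ioi x, y ^ (2*h+1) * Real.exp (-y^2/2) := by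
    apply setIntegral_congr_fun measurableSet_Ioi
    intro y hy
    simp only
    rw [Real.sign_of_pos (by simp only [mem_Ioi] at hy; linarith)]
    ring
  rw [e1, e2, hIic, hIoi]
  ring

lemma moment (s : ℕ) : ∫ x : ℝ, x ^ (2*s) * Real.exp (-x^2) = Real.Gamma ((s:ℝ) + 1/2) := by
  have h1 : ∫ x : ℝ, x ^ (2*s) * Real.exp (-x^2)
      = 2 * ∫ x in Ioi (0:ℝ), x ^ (2*s) * Real.exp (-x^2) := by
    rw [← integral_comp_abs (f := fun t => t ^ (2*s) * Real.exp (-t^2))]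
    congr 1; funext x
    rw [pow_mul, pow_mul, sq_abs]
  have h2 : ∫ x in Ioi (0:ℝ), x ^ (2*s) * Real.exp (-x^2)
      = ∫ x in Ioi (0:ℝ), x ^ ((2*s : ℕ) : ℝ) * Real.exp (-x ^ (2:ℝ)) := by
    apply setIntegral_congr_fun measurableSet_Ioi
    intro x _
    simp only
    rw [Real.rpow_natCast]
    congr 2
    rw [show (2:ℝ) = ((2:ℕ):ℝ) by norm_num, Real.rpow_natCast]
  have h3 : (-1 : ℝ) < ((2*s : ℕ) : ℝ) := neg_one_lt_zero.trans_le (Nat.cast_nonneg _)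
  rw [h1, h2, integral_rpow_mul_exp_neg_rpow two_pos h3]
  rw [show (((2*s : ℕ):ℝ) + 1)/2 = (s:ℝ) + 1/2 by push_cast; ring]
  ring

lemma Efun_one (j : ℕ) : Efun j 1 = Real.Gamma ((j:ℝ) - 1/2) := by
  simp [Efun]

lemma Efun_succ (j k : ℕ) (hk : 1 ≤ k) :
    Efun j (k+1) = 2*(k:ℝ)*Efun j k + Real.Gamma ((k:ℝ) + (j:ℝ) - 1/2) := by
  obtain ⟨t, rfl⟩ : ∃ t, k = t + 1 := ⟨k - 1, by omega⟩
  unfold Efun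
  rw [Finset.sum_range_succ, mul_add]
  simp only [Nat.add_sub_cancel]
  have hfac : ((t+1).factorial : ℝ) ≠ 0 := Nat.cast_ne_zero.mpr (t+1).factorial_ne_zero
  have hpow : (2:ℝ) ^ (t+1) ≠ 0 := by positivity
  congr 1
  · rw [Nat.factorial_succ, pow_succ]
    push_cast
    ring
  · field_simp

lemma int_powR (m s : ℕ) :
    Integrable (fun x : ℝ => x ^ m * Rp s x * Real.exp (-x^2)) := by
  induction s with
  | zero =>
    have := int_pow_gauss_one m
    refine this.congr ?_
    filter_upwards with x
    simp [Rp]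
  | succ s ih =>
    have h1 := (int_pow_gauss_one (m + (2*s+2))).add (ih.const_mul (2*(s:ℝ)+2))
    refine h1.congr ?_
    filter_upwards with x
    simp only [Rp, pow_add, Pi.add_apply]
    ring

lemma T_eval (m s : ℕ) :
    ∫ x : ℝ, x ^ (2*m) * Rp s x * Real.exp (-x^2) = Efun (m + 1) (s+1) := by
  induction s with
  | zero =>
    rw [Efun_one]
    rw [show ((m+1 : ℕ):ℝ) - 1/2 = (m:ℝ) + 1/2 by push_cast; ring]
    rw [← moment m]
    congr 1; funext x; simp [Rp]
  | succ s ih =>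
    have split : ∫ x : ℝ, x ^ (2*m) * Rp (s+1) x * Real.exp (-x^2)
        = (∫ x : ℝ, x ^ (2*(m+s+1)) * Real.exp (-x^2))
          + (2*(s:ℝ)+2) * ∫ x : ℝ, x ^ (2*m) * Rp s x * Real.exp (-x^2) := by
      rw [← integral_const_mul, ← integral_add (int_pow_gauss_one _) ((int_powR _ _).const_mul _)]
      congr 1; funext x
      simp only [Rp, pow_add, pow_mul]
      ring
    rw [split, moment, ih, Efun_succ (m+1) (s+1) (by omega)]
    rw [show ((m+s+1 : ℕ):ℝ) + 1/2 = ((s+1:ℕ):ℝ) + ((m+1:ℕ):ℝ) - 1/2 by push_cast; ring]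
    push_cast
    ring

lemma Efun_succ' (j k : ℕ) :
    Efun j (k+1) = 2*(k:ℝ)*Efun j k + Real.Gamma ((k:ℝ) + (j:ℝ) - 1/2) := by
  rcases Nat.eq_zero_or_pos k with rfl | hk
  · rw [Efun_one]
    norm_num
  · exact Efun_succ j k hk

/-- Exact evaluation of `f^{(p,q)}_{2k₁-2,2k₂-1}` for even `p`, `q`. -/

theorem fpq_exact (p q : ℕ) (hp : Even p) (hq : Even q)
    (k₁ k₂ : ℕ) (hk₁ : 1 ≤ k₁) (hk₂ : 1 ≤ k₂) :
    fpq p q k₁ k₂ =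
      Real.Gamma ((k₁ : ℝ) + (k₂ : ℝ) + ((p : ℝ) + (q : ℝ)) / 2 - 3 / 2) +
        (q : ℝ) * Efun (k₁ + p / 2) (k₂ + q / 2 - 1) := by
  obtain ⟨a, rfl⟩ := hp
  obtain ⟨b, rfl⟩ := hq
  obtain ⟨c, rfl⟩ : ∃ c, k₁ = c + 1 := ⟨k₁ - 1, by omega⟩
  have hP1 : ∀ x : ℝ, Pskew (2*(c+1) - 2) x = x ^ (2*c) := by
    intro x
    rw [show 2*(c+1) - 2 = 2*c from by omega]
    rw [Pskew, if_pos (even_two_mul c)]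
  have hexp2 : ∀ x : ℝ, Real.exp (-x^2) = Real.exp (-x^2/2) * Real.exp (-x^2/2) := by
    intro x; rw [← Real.exp_add]; ring_nf
  obtain ⟨d, rfl⟩ : ∃ d, k₂ = d + 1 := ⟨k₂ - 1, by omega⟩
  rcases d with _ | d
  · -- case k₂ = 1
    have hP2 : ∀ y : ℝ, Pskew (2*(0+1) - 1) y = y := by
      intro y
      rw [show 2*(0+1) - 1 = 1 from rfl]
      rw [Pskew, if_neg (by decide)]
      norm_num
    have inner_eq : ∀ x : ℝ,
        (∫ y : ℝ, x ^ (a+a) * y ^ (b+b) * Real.exp (-x^2/2 - y^2/2) *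
            Pskew (2*(c+1) - 2) x * Pskew (2*(0+1) - 1) y * Real.sign (y - x))
          = 2 * (x ^ (2*(a+c)) * Rp b x * Real.exp (-x^2)) := by
      intro x
      have step1 : (fun y : ℝ => x ^ (a+a) * y ^ (b+b) * Real.exp (-x^2/2 - y^2/2) *
            Pskew (2*(c+1) - 2) x * Pskew (2*(0+1) - 1) y * Real.sign (y - x))
          = fun y : ℝ => (x ^ (a+a) * x ^ (2*c) * Real.exp (-x^2/2)) *
              (y ^ (2*b+1) * Real.exp (-y^2/2) * Real.sign (y - x)) := by
        funext y
        rw [hP1, hP2, show -x^2/2 - y^2/2 = (-x^2/2) + (-y^2/2) by ring, Real.exp_add]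
        ring
      rw [step1, integral_const_mul, integral_sign_odd b x, hexp2]
      ring
    unfold fpq
    simp only [inner_eq]
    rw [integral_const_mul, T_eval (a+c) b]
    rw [show ((a+a)/2 : ℕ) = a from by omega,
        show (0 + 1 + (b+b)/2 - 1 : ℕ) = b from by omega,
        show (c + 1 + a : ℕ) = a + c + 1 from by omega]
    rw [Efun_succ' (a+c+1) b]
    rw [show (b:ℝ) + ((a+c+1 : ℕ):ℝ) - 1/2
        = ((c+1 : ℕ):ℝ) + ((0+1 : ℕ):ℝ) + (((a+a:ℕ):ℝ) + ((b+b:ℕ):ℝ))/2 - 3/2 by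
      push_cast; ring]
    push_cast
    ring
  · -- case k₂ = d + 2
    have hP2 : ∀ y : ℝ, Pskew (2*(d+1+1) - 1) y
        = y ^ (2*d+3) - (2*(d:ℝ)+2) * y ^ (2*d+1) := by
      intro y
      rw [show 2*(d+1+1) - 1 = 2*d+3 from by omega]
      rw [Pskew, if_neg (by intro hcon; obtain ⟨t, ht⟩ := hcon; omega)]
      rw [show (2*d+3) - 2 = 2*d+1 from by omega]
      push_cast
      ring
    have inner_eq : ∀ x : ℝ,
        (∫ y : ℝ, x ^ (a+a) * y ^ (b+b) * Real.exp (-x^2/2 - y^2/2) *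
            Pskew (2*(c+1) - 2) x * Pskew (2*(d+1+1) - 1) y * Real.sign (y - x))
          = 2 * (x ^ (2*(a+c)) * Rp (b+d+1) x * Real.exp (-x^2))
            - (2*(d:ℝ)+2) * (2 * (x ^ (2*(a+c)) * Rp (b+d) x * Real.exp (-x^2))) := by
      intro x
      have step1 : (fun y : ℝ => x ^ (a+a) * y ^ (b+b) * Real.exp (-x^2/2 - y^2/2) *
            Pskew (2*(c+1) - 2) x * Pskew (2*(d+1+1) - 1) y * Real.sign (y - x))
          = fun y : ℝ => (x ^ (a+a) * x ^ (2*c) * Real.exp (-x^2/2)) *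
              (y ^ (2*(b+d+1)+1) * Real.exp (-y^2/2) * Real.sign (y - x))
            - ((2*(d:ℝ)+2) * (x ^ (a+a) * x ^ (2*c) * Real.exp (-x^2/2))) *
              (y ^ (2*(b+d)+1) * Real.exp (-y^2/2) * Real.sign (y - x)) := by
        funext y
        rw [hP1, hP2, show -x^2/2 - y^2/2 = (-x^2/2) + (-y^2/2) by ring, Real.exp_add]
        ring
      rw [step1, integral_sub ((int_pow_gauss_sign _ x).const_mul _)
            ((int_pow_gauss_sign _ x).const_mul _),
          integral_const_mul, integral_const_mul, integral_sign_odd, integral_sign_odd, hexp2]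
      ring
    unfold fpq
    simp only [inner_eq]
    rw [integral_sub ((int_powR _ _).const_mul 2) (((int_powR _ _).const_mul 2).const_mul _),
        integral_const_mul, integral_const_mul, integral_const_mul,
        T_eval (a+c) (b+d+1), T_eval (a+c) (b+d)]
    rw [show ((a+a)/2 : ℕ) = a from by omega,
        show (d + 1 + 1 + (b+b)/2 - 1 : ℕ) = b+d+1 from by omega,
        show (c + 1 + a : ℕ) = a + c + 1 from by omega]
    rw [show (b+d+1+1 : ℕ) = (b+d+1)+1 from rfl, Efun_succ' (a+c+1) (b+d+1)]
    rw [show ((b+d+1 : ℕ):ℝ) + ((a+c+1 : ℕ):ℝ) - 1/2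
        = ((c+1 : ℕ):ℝ) + ((d+1+1 : ℕ):ℝ) + (((a+a:ℕ):ℝ) + ((b+b:ℕ):ℝ))/2 - 3/2 by
      push_cast; ring]
    push_cast
    ring
end

section
/- For all integers j ≥ 1 and k ≥ 1, the double integral identity (1/2) ∫_ℝ ∫_ℝ x^{2j−2} y^{2k−1} sign(y − x) e^{−x²/2 − y²/2} dx dy = (k−1)! · 2^{k−1} · Σ_{i=0}^{k−1} Γ(i + j − 1/2) / (2^i i!) holds. -/
open MeasureTheory Set Filter

namespace SkewAux

noncomputable def cc (K i : ℕ) : ℝ :=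
  (K.factorial : ℝ) * 2 ^ K / (2 ^ i * (i.factorial : ℝ))

noncomputable def FF (K : ℕ) (y : ℝ) : ℝ :=
  -Real.exp (-y ^ 2 / 2) * ∑ i ∈ Finset.range (K + 1), cc K i * y ^ (2 * i)

lemma cc_succ (K i : ℕ) : (2 * ((i : ℝ) + 1)) * cc K (i + 1) = cc K i := by
  have h1 : ((i.factorial : ℝ)) ≠ 0 := Nat.cast_ne_zero.2 i.factorial_pos.ne'
  have h2 : ((2 : ℝ)) ^ i ≠ 0 := by positivity
  have h3 : ((i : ℝ) + 1) ≠ 0 := by positivity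
  simp only [cc, pow_succ, Nat.factorial_succ]
  push_cast
  field_simp

lemma cc_last (K : ℕ) : cc K K = 1 := by
  have h1 : ((K.factorial : ℝ)) ≠ 0 := Nat.cast_ne_zero.2 K.factorial_pos.ne'
  have h2 : ((2 : ℝ)) ^ K ≠ 0 := by positivity
  simp only [cc]
  field_simp

lemma key_sum (K : ℕ) (y : ℝ) :
    (∑ i ∈ Finset.range (K + 1), cc K i * y ^ (2 * i)) * y -
      ∑ i ∈ Finset.range (K + 1), cc K i * ((2 * i : ℕ) * y ^ (2 * i - 1)) =
      y ^ (2 * K + 1) := by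
  have h1 : (∑ i ∈ Finset.range (K + 1), cc K i * y ^ (2 * i)) * y =
      ∑ i ∈ Finset.range (K + 1), cc K i * y ^ (2 * i + 1) := by
    rw [Finset.sum_mul]
    refine Finset.sum_congr rfl fun i _ => ?_
    rw [pow_succ]; ring
  have h2 : ∑ i ∈ Finset.range (K + 1), cc K i * ((2 * i : ℕ) * y ^ (2 * i - 1)) =
      ∑ i ∈ Finset.range K, cc K i * y ^ (2 * i + 1) := by
    rw [Finset.sum_range_succ']
    simp only [Nat.mul_zero, Nat.cast_zero, zero_mul, mul_zero, add_zero]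
    refine Finset.sum_congr rfl fun i _ => ?_
    have he : 2 * (i + 1) - 1 = 2 * i + 1 := by omega
    rw [he, ← cc_succ K i]
    push_cast
    ring
  rw [h1, h2, Finset.sum_range_succ, add_sub_cancel_left, cc_last, one_mul]

lemma FF_hasDeriv (K : ℕ) (y : ℝ) :
    HasDerivAt (FF K) (y ^ (2 * K + 1) * Real.exp (-y ^ 2 / 2)) y := by
  have hE : HasDerivAt (fun y : ℝ => Real.exp (-y ^ 2 / 2))
      (Real.exp (-y ^ 2 / 2) * (-y)) y := by
    have h1 : HasDerivAt (fun y : ℝ => -y ^ 2 / 2) (-y) y := by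
      have := ((hasDerivAt_pow 2 y).neg).div_const 2
      exact this.congr_deriv (by norm_num; ring)
    exact h1.exp
  have hS : HasDerivAt (fun y : ℝ => ∑ i ∈ Finset.range (K + 1), cc K i * y ^ (2 * i))
      (∑ i ∈ Finset.range (K + 1), cc K i * ((2 * i : ℕ) * y ^ (2 * i - 1))) y := by
    apply HasDerivAt.fun_sum
    intro i _
    exact (hasDerivAt_pow (2 * i) y).const_mul (cc K i)
  have h := (hE.mul hS).neg
  have hgoal : -(Real.exp (-y ^ 2 / 2) * (-y) *
        (∑ i ∈ Finset.range (K + 1), cc K i * y ^ (2 * i)) +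
      Real.exp (-y ^ 2 / 2) *
        ∑ i ∈ Finset.range (K + 1), cc K i * ((2 * i : ℕ) * y ^ (2 * i - 1))) =
      y ^ (2 * K + 1) * Real.exp (-y ^ 2 / 2) := by
    have := key_sum K y
    calc -(Real.exp (-y ^ 2 / 2) * (-y) *
        (∑ i ∈ Finset.range (K + 1), cc K i * y ^ (2 * i)) +
      Real.exp (-y ^ 2 / 2) *
        ∑ i ∈ Finset.range (K + 1), cc K i * ((2 * i : ℕ) * y ^ (2 * i - 1)))
        = Real.exp (-y ^ 2 / 2) *
            ((∑ i ∈ Finset.range (K + 1), cc K i * y ^ (2 * i)) * y -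
              ∑ i ∈ Finset.range (K + 1), cc K i * ((2 * i : ℕ) * y ^ (2 * i - 1))) := by
          ring
      _ = y ^ (2 * K + 1) * Real.exp (-y ^ 2 / 2) := by rw [this]; ring
  rw [hgoal] at h
  have hF : FF K = -((fun y => Real.exp (-y ^ 2 / 2)) *
      fun y => ∑ i ∈ Finset.range (K + 1), cc K i * y ^ (2 * i)) := by
    funext z
    simp only [FF, Pi.neg_apply, Pi.mul_apply]
    ring
  rw [hF]
  exact h

lemma ig1 (n : ℕ) : Integrable (fun x : ℝ => x ^ n * Real.exp (-x ^ 2)) := by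
  have h := integrable_rpow_mul_exp_neg_mul_sq (b := 1) one_pos
    (s := (n : ℝ)) (by linarith [Nat.cast_nonneg (α := ℝ) n])
  simp only [Real.rpow_natCast, one_mul, neg_mul] at h
  exact h

lemma ig2 (n : ℕ) : Integrable (fun x : ℝ => x ^ n * Real.exp (-x ^ 2 / 2)) := by
  have h := integrable_rpow_mul_exp_neg_mul_sq (b := 1 / 2) (by norm_num)
    (s := (n : ℝ)) (by linarith [Nat.cast_nonneg (α := ℝ) n])
  simp only [Real.rpow_natCast] at h
  have he : ∀ x : ℝ, -(1 / 2) * x ^ 2 = -x ^ 2 / 2 := fun x => by ring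
  simpa only [he] using h

lemma base_tendsto (n : ℕ) :
    Tendsto (fun y : ℝ => y ^ n * Real.exp (-y ^ 2 / 2)) atTop (nhds 0) := by
  have h := (rpow_mul_exp_neg_mul_sq_isLittleO_exp_neg
    (b := 1 / 2) (by norm_num) (n : ℝ)).isBigO.trans_tendsto
    (Real.tendsto_exp_neg_atTop_nhds_zero.comp
      (Tendsto.atTop_div_const two_pos tendsto_id) |>.congr fun x => by
        simp [Function.comp]; ring_nf)
  simp only [Real.rpow_natCast] at h
  have he : ∀ x : ℝ, -(1 / 2) * x ^ 2 = -x ^ 2 / 2 := fun x => by ring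
  simpa only [he] using h

lemma FF_eq (K : ℕ) : FF K = fun y =>
    ∑ i ∈ Finset.range (K + 1), -(cc K i) * (y ^ (2 * i) * Real.exp (-y ^ 2 / 2)) := by
  funext y
  simp only [FF, neg_mul, Finset.mul_sum, ← Finset.sum_neg_distrib]
  refine Finset.sum_congr rfl fun i _ => ?_
  ring

lemma FF_tendsto_top (K : ℕ) : Tendsto (FF K) atTop (nhds 0) := by
  rw [FF_eq]
  have h := tendsto_finset_sum (Finset.range (K + 1))
    (fun i _ => (base_tendsto (2 * i)).const_mul (-(cc K i)))
  simpa using h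

lemma FF_even (K : ℕ) (y : ℝ) : FF K (-y) = FF K y := by
  simp [FF, pow_mul, neg_sq]

lemma FF_tendsto_bot (K : ℕ) : Tendsto (FF K) atBot (nhds 0) := by
  have h := (FF_tendsto_top K).comp tendsto_neg_atBot_atTop
  have : (FF K ∘ fun y : ℝ => -y) = FF K := by
    funext y; simp [Function.comp, FF_even]
  rwa [this] at h

lemma tail_Ioi (K : ℕ) (x : ℝ) :
    ∫ y in Ioi x, y ^ (2 * K + 1) * Real.exp (-y ^ 2 / 2) = -(FF K x) := by
  have h := integral_Ioi_of_hasDerivAt_of_tendsto' (a := x)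
    (fun y _ => FF_hasDeriv K y) (ig2 (2 * K + 1)).integrableOn (FF_tendsto_top K)
  simpa using h

lemma tail_Iic (K : ℕ) (x : ℝ) :
    ∫ y in Iic x, y ^ (2 * K + 1) * Real.exp (-y ^ 2 / 2) = FF K x := by
  have h := integral_Iic_of_hasDerivAt_of_tendsto' (a := x)
    (fun y _ => FF_hasDeriv K y) (ig2 (2 * K + 1)).integrableOn (FF_tendsto_bot K)
  simpa using h

lemma measurable_realSign : Measurable Real.sign := by
  have : Real.sign = fun r : ℝ => if r < 0 then (-1 : ℝ) else if 0 < r then 1 else 0 := by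
    funext r; rfl
  rw [this]
  refine Measurable.ite measurableSet_Iio measurable_const ?_
  exact Measurable.ite measurableSet_Ioi measurable_const measurable_const

lemma abs_realSign_le (t : ℝ) : |Real.sign t| ≤ 1 := by
  rcases lt_trichotomy t 0 with h | h | h
  · rw [Real.sign_of_neg h]; norm_num
  · rw [h, Real.sign_zero]; norm_num
  · rw [Real.sign_of_pos h]; norm_num

lemma sign_integral (K : ℕ) (x : ℝ) :
    ∫ y : ℝ, y ^ (2 * K + 1) * Real.sign (y - x) * Real.exp (-y ^ 2 / 2) =
      -2 * FF K x := by
  set ψ : ℝ → ℝ := fun y => y ^ (2 * K + 1) * Real.exp (-y ^ 2 / 2) with hψdef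
  set φ : ℝ → ℝ := fun y => y ^ (2 * K + 1) * Real.sign (y - x) * Real.exp (-y ^ 2 / 2)
    with hφdef
  have hψ : Integrable ψ := ig2 (2 * K + 1)
  have hφm : AEStronglyMeasurable φ volume := by
    apply Measurable.aestronglyMeasurable
    exact ((measurable_id.pow_const _).mul
      (measurable_realSign.comp (measurable_id.sub_const x))).mul
      (Real.measurable_exp.comp ((measurable_id.pow_const 2).neg.div_const 2))
  have hφ : Integrable φ := by
    refine Integrable.mono' hψ.abs hφm (Eventually.of_forall fun y => ?_)
    simp only [hφdef, hψdef, Real.norm_eq_abs, abs_mul]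
    have h1 := abs_realSign_le (y - x)
    have h2 : |Real.exp (-y ^ 2 / 2)| = Real.exp (-y ^ 2 / 2) :=
      abs_of_pos (Real.exp_pos _)
    rw [h2]
    calc |y ^ (2 * K + 1)| * |Real.sign (y - x)| * Real.exp (-y ^ 2 / 2)
        ≤ |y ^ (2 * K + 1)| * 1 * Real.exp (-y ^ 2 / 2) := by
          gcongr
      _ = |y ^ (2 * K + 1)| * Real.exp (-y ^ 2 / 2) := by ring
  have hsplit : (∫ y in Ioi x, φ y) + ∫ y in Iic x, φ y = ∫ y, φ y := by
    have := integral_add_compl (measurableSet_Ioi (a := x)) hφ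
    rwa [compl_Ioi] at this
  have h1 : ∫ y in Ioi x, φ y = -(FF K x) := by
    rw [setIntegral_congr_fun measurableSet_Ioi
      (fun y hy => by
        simp only [hφdef, hψdef, Real.sign_of_pos (sub_pos.2 (mem_Ioi.1 hy))]
        ring : EqOn φ ψ (Ioi x))]
    exact tail_Ioi K x
  have h2 : ∫ y in Iic x, φ y = -(FF K x) := by
    have e1 : ∫ y in Iic x, φ y = ∫ y in Iio x, φ y :=
      (setIntegral_congr_set Iio_ae_eq_Iic).symm
    have e2 : ∫ y in Iio x, φ y = ∫ y in Iio x, -ψ y :=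
      setIntegral_congr_fun measurableSet_Iio fun y hy => by
        simp only [hφdef, hψdef, Real.sign_of_neg (sub_neg.2 (mem_Iio.1 hy))]
        ring
    have e3 : ∫ y in Iio x, ψ y = ∫ y in Iic x, ψ y :=
      setIntegral_congr_set Iio_ae_eq_Iic
    rw [e1, e2, integral_neg, e3, tail_Iic]
  rw [← hsplit, h1, h2]
  ring

lemma gauss_moment (m : ℕ) :
    ∫ x : ℝ, x ^ (2 * m) * Real.exp (-x ^ 2) = Real.Gamma ((m : ℝ) + 1 / 2) := by
  have h0 : ∫ x : ℝ, x ^ (2 * m) * Real.exp (-x ^ 2) =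
      2 * ∫ t in Ioi (0 : ℝ), t ^ (2 * m) * Real.exp (-t ^ 2) := by
    rw [← integral_comp_abs (f := fun t => t ^ (2 * m) * Real.exp (-t ^ 2))]
    refine integral_congr_ae (Eventually.of_forall fun x => ?_)
    simp [pow_mul, sq_abs]
  rw [h0]
  have h1 : EqOn (fun t : ℝ => t ^ (2 * m) * Real.exp (-t ^ 2))
      (fun t : ℝ => t ^ ((2 * m : ℕ) : ℝ) * Real.exp (-t ^ (2 : ℝ))) (Ioi 0) := by
    intro t _
    simp only [Real.rpow_natCast, Real.rpow_two]
  rw [setIntegral_congr_fun measurableSet_Ioi h1,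
    integral_rpow_mul_exp_neg_rpow two_pos (by linarith [Nat.cast_nonneg (α := ℝ) (2 * m)])]
  rw [← mul_assoc]
  norm_num
  congr 1
  push_cast
  ring

end SkewAux

open SkewAux

/-- The double integral identity
`(1/2) ∫∫ x^{2j-2} y^{2k-1} sign(y-x) e^{-x²/2-y²/2} dx dy
  = (k-1)! 2^{k-1} ∑_{i=0}^{k-1} Γ(i+j-1/2)/(2^i i!)`. -/
theorem skew_integral_Efun (j k : ℕ) (hj : 1 ≤ j) (hk : 1 ≤ k) :
    (1 / 2) * ∫ x : ℝ, ∫ y : ℝ,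
        x ^ (2 * j - 2) * y ^ (2 * k - 1) * Real.sign (y - x) *
          Real.exp (-x ^ 2 / 2 - y ^ 2 / 2) =
      ((k - 1).factorial : ℝ) * 2 ^ (k - 1) *
        ∑ i ∈ Finset.range k,
          Real.Gamma ((i : ℝ) + (j : ℝ) - 1 / 2) / (2 ^ i * (i.factorial : ℝ)) := by
  obtain ⟨J, rfl⟩ : ∃ J, j = J + 1 := ⟨j - 1, by omega⟩
  obtain ⟨K, rfl⟩ : ∃ K, k = K + 1 := ⟨k - 1, by omega⟩
  have e1 : 2 * (J + 1) - 2 = 2 * J := by omega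
  have e2 : 2 * (K + 1) - 1 = 2 * K + 1 := by omega
  have e3 : K + 1 - 1 = K := by omega
  simp only [e1, e2, e3]
  have hinner : ∀ x : ℝ,
      (∫ y : ℝ, x ^ (2 * J) * y ^ (2 * K + 1) * Real.sign (y - x) *
          Real.exp (-x ^ 2 / 2 - y ^ 2 / 2)) =
        ∑ i ∈ Finset.range (K + 1),
          (2 * cc K i) * (x ^ (2 * (J + i)) * Real.exp (-x ^ 2)) := by
    intro x
    have h1 : ∀ y : ℝ, x ^ (2 * J) * y ^ (2 * K + 1) * Real.sign (y - x) *
        Real.exp (-x ^ 2 / 2 - y ^ 2 / 2) =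
        (x ^ (2 * J) * Real.exp (-x ^ 2 / 2)) *
          (y ^ (2 * K + 1) * Real.sign (y - x) * Real.exp (-y ^ 2 / 2)) := by
      intro y
      rw [show -x ^ 2 / 2 - y ^ 2 / 2 = -x ^ 2 / 2 + (-y ^ 2 / 2) by ring, Real.exp_add]
      ring
    simp_rw [h1]
    rw [integral_const_mul, sign_integral K x]
    simp only [FF, Finset.mul_sum]
    refine Finset.sum_congr rfl fun i _ => ?_
    rw [show 2 * (J + i) = 2 * J + 2 * i by ring, pow_add,
      show (-x ^ 2 : ℝ) = -x ^ 2 / 2 + -x ^ 2 / 2 by ring, Real.exp_add]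
    ring
  rw [integral_congr_ae (Eventually.of_forall hinner)]
  rw [integral_finset_sum _ (fun i _ => ((ig1 (2 * (J + i))).const_mul (2 * cc K i)))]
  rw [Finset.mul_sum, Finset.mul_sum]
  refine Finset.sum_congr rfl fun i _ => ?_
  rw [integral_const_mul, gauss_moment (J + i)]
  have harg : ((J + i : ℕ) : ℝ) + 1 / 2 = (i : ℝ) + ((J + 1 : ℕ) : ℝ) - 1 / 2 := by
    push_cast; ring
  rw [harg]
  simp only [cc]
  ring
end

section
/- For all even nonnegative integers p and q and every integer n ≥ 1, the following integral representation holds: Σ_{k₁=1}^{n} Σ_{k₂=1}^{n} Γ(k₁ + k₂ + p/2 − 3/2) Γ(k₁ + k₂ + q/2 − 3/2) / (Γ(2k₁ − 1) Γ(2k₂ − 1)) = 4 ∫_0^∞ ∫_0^∞ x₁^p x₂^q (cosh_{n−1}(x₁ x₂))² e^{−x₁² − x₂²} dx₁ dx₂, where cosh_{n−1}(t) = Σ_{k=0}^{n−1} t^{2k}/(2k)! is the truncated hyperbolic cosine series. -/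
open MeasureTheory Set

lemma rpow_pow_aux (m : ℕ) (x : ℝ) :
    x ^ ((m:ℝ)) * Real.exp (-x ^ ((2:ℝ))) = x ^ m * Real.exp (-x ^ 2) := by
  rw [show ((2:ℝ)) = ((2:ℕ):ℝ) by norm_num, Real.rpow_natCast, Real.rpow_natCast]

lemma gauss_moment_integrable (m : ℕ) :
    IntegrableOn (fun x : ℝ => x ^ m * Real.exp (-x ^ 2)) (Set.Ioi 0) := by
  have h := integrableOn_rpow_mul_exp_neg_rpow (s := (m : ℝ)) (p := 2)
    (lt_of_lt_of_le neg_one_lt_zero (Nat.cast_nonneg m)) two_pos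
  exact h.congr_fun (fun x hx => rpow_pow_aux m x) measurableSet_Ioi

lemma gauss_moment (m : ℕ) :
    ∫ x in Set.Ioi (0:ℝ), x ^ m * Real.exp (-x ^ 2)
      = Real.Gamma (((m : ℝ) + 1) / 2) / 2 := by
  have h := integral_rpow_mul_exp_neg_rpow (p := 2) (q := (m : ℝ)) two_pos
    (lt_of_lt_of_le neg_one_lt_zero (Nat.cast_nonneg m))
  simp only [rpow_pow_aux] at h
  rw [h]; ring

noncomputable def coshTrunc (n : ℕ) (t : ℝ) : ℝ :=
  ∑ k ∈ Finset.range n, t ^ (2 * k) / ((2 * k).factorial : ℝ)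

/-- Gaussian integral representation of the double sum `S_{p,q}`. -/
theorem double_sum_integral_rep (p q : ℕ) (hp : Even p) (hq : Even q) (n : ℕ) (hn : 1 ≤ n) :
    ∑ k₁ ∈ Finset.Icc 1 n, ∑ k₂ ∈ Finset.Icc 1 n,
        Real.Gamma ((k₁ : ℝ) + (k₂ : ℝ) + (p : ℝ) / 2 - 3 / 2) *
          Real.Gamma ((k₁ : ℝ) + (k₂ : ℝ) + (q : ℝ) / 2 - 3 / 2) /
          (Real.Gamma (2 * (k₁ : ℝ) - 1) * Real.Gamma (2 * (k₂ : ℝ) - 1)) =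
      4 * ∫ x₁ in Set.Ioi (0 : ℝ), ∫ x₂ in Set.Ioi (0 : ℝ),
        x₁ ^ p * x₂ ^ q * (coshTrunc n (x₁ * x₂)) ^ 2 * Real.exp (-x₁ ^ 2 - x₂ ^ 2) := by
  set s := Finset.range n ×ˢ Finset.range n with hs
  -- pointwise expansion
  have hexpand : ∀ x₁ x₂ : ℝ,
      x₁ ^ p * x₂ ^ q * (coshTrunc n (x₁ * x₂)) ^ 2 * Real.exp (-x₁ ^ 2 - x₂ ^ 2)
        = ∑ j ∈ s,
            ((x₁ ^ (p + 2 * (j.1 + j.2)) * Real.exp (-x₁ ^ 2)) /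
                (((2 * j.1).factorial : ℝ) * ((2 * j.2).factorial : ℝ))) *
              (x₂ ^ (q + 2 * (j.1 + j.2)) * Real.exp (-x₂ ^ 2)) := by
    intro x₁ x₂
    have hc : (coshTrunc n (x₁ * x₂)) ^ 2
        = ∑ j ∈ s, (x₁ * x₂) ^ (2 * (j.1 + j.2)) /
            (((2 * j.1).factorial : ℝ) * ((2 * j.2).factorial : ℝ)) := by
      rw [coshTrunc, sq, Finset.sum_mul_sum, ← Finset.sum_product']
      refine Finset.sum_congr rfl fun j _ => ?_
      rw [div_mul_div_comm, ← pow_add]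
      congr 2
      ring
    rw [hc, Finset.mul_sum, Finset.sum_mul]
    refine Finset.sum_congr rfl fun j _ => ?_
    rw [show (-x₁ ^ 2 - x₂ ^ 2) = (-x₁ ^ 2) + (-x₂ ^ 2) by ring, Real.exp_add,
      mul_pow, pow_add, pow_add]
    ring
  -- inner integral
  have h1 : ∀ x₁ : ℝ,
      (∫ x₂ in Set.Ioi (0:ℝ), ∑ j ∈ s,
          ((x₁ ^ (p + 2 * (j.1 + j.2)) * Real.exp (-x₁ ^ 2)) /
              (((2 * j.1).factorial : ℝ) * ((2 * j.2).factorial : ℝ))) *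
            (x₂ ^ (q + 2 * (j.1 + j.2)) * Real.exp (-x₂ ^ 2)))
        = ∑ j ∈ s,
            (Real.Gamma ((((q + 2 * (j.1 + j.2) : ℕ) : ℝ) + 1) / 2) / 2 /
                (((2 * j.1).factorial : ℝ) * ((2 * j.2).factorial : ℝ))) *
              (x₁ ^ (p + 2 * (j.1 + j.2)) * Real.exp (-x₁ ^ 2)) := by
    intro x₁
    rw [integral_finset_sum s
      (fun j _ => (gauss_moment_integrable (q + 2 * (j.1 + j.2))).const_mul _)]
    refine Finset.sum_congr rfl fun j _ => ?_
    rw [integral_const_mul, gauss_moment]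
    ring
  have hint2 : ∀ j : ℕ × ℕ, j ∈ s → IntegrableOn
      (fun x₁ : ℝ =>
        (Real.Gamma ((((q + 2 * (j.1 + j.2) : ℕ) : ℝ) + 1) / 2) / 2 /
            (((2 * j.1).factorial : ℝ) * ((2 * j.2).factorial : ℝ))) *
          (x₁ ^ (p + 2 * (j.1 + j.2)) * Real.exp (-x₁ ^ 2))) (Set.Ioi 0) :=
    fun j _ => (gauss_moment_integrable (p + 2 * (j.1 + j.2))).const_mul _
  simp_rw [hexpand, h1]
  rw [integral_finset_sum s hint2]
  simp_rw [integral_const_mul, gauss_moment]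
  -- now both sides are finite sums
  rw [hs, Finset.sum_product, Finset.mul_sum]
  rw [← Finset.Ico_add_one_right_eq_Icc, Finset.sum_Ico_eq_sum_range]
  simp only [Nat.succ_sub_one]
  refine Finset.sum_congr rfl fun j₁ _ => ?_
  rw [Finset.sum_Ico_eq_sum_range, Finset.mul_sum]
  simp only [Nat.add_sub_cancel]
  refine Finset.sum_congr rfl fun j₂ _ => ?_
  have e1 : ((1 + j₁ : ℕ) : ℝ) + ((1 + j₂ : ℕ) : ℝ) + (p : ℝ) / 2 - 3 / 2
      = (((p + 2 * (j₁ + j₂) : ℕ) : ℝ) + 1) / 2 := by push_cast; ring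
  have e2 : ((1 + j₁ : ℕ) : ℝ) + ((1 + j₂ : ℕ) : ℝ) + (q : ℝ) / 2 - 3 / 2
      = (((q + 2 * (j₁ + j₂) : ℕ) : ℝ) + 1) / 2 := by push_cast; ring
  have e3 : 2 * ((1 + j₁ : ℕ) : ℝ) - 1 = ((2 * j₁ : ℕ) : ℝ) + 1 := by push_cast; ring
  have e4 : 2 * ((1 + j₂ : ℕ) : ℝ) - 1 = ((2 * j₂ : ℕ) : ℝ) + 1 := by push_cast; ring
  rw [e1, e2, e3, e4, Real.Gamma_nat_eq_factorial, Real.Gamma_nat_eq_factorial]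
  ring
end
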